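/- Let T be a triangle with edge e ⊂ ∂T of length |e|, and let ψ be the weak function equal to 0 in the interior of T and equal to the indicator of e on ∂T. Then the weak gradient of ψ in RT_0(T) equals (C_T/3)(x − x_T) + (|e|/|T|) n, where n is the outward unit normal on e, x_T the centroid of T, and C_T = 2|T|/‖x − x_T‖²_{L²(T)}. -/

import Mathlib

open MeasureTheory
open scoped InnerProductSpace

open MeasureTheory

def Δ2 : Set (ℝ × ℝ) := {p : ℝ × ℝ | 0 ≤ p.1 ∧ 0 ≤ p.2 ∧ p.1 + p.2 ≤ 1}

lemma Δ2_closed : IsClosed Δ2 := by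
  have : Δ2 = (fun p : ℝ×ℝ => p.1) ⁻¹' (Set.Ici 0) ∩ ((fun p : ℝ×ℝ => p.2) ⁻¹' (Set.Ici 0) ∩ (fun p : ℝ×ℝ => p.1+p.2) ⁻¹' (Set.Iic 1)) := by
    ext p; simp [Δ2, and_assoc]
  rw [this]
  exact ((isClosed_Ici.preimage continuous_fst)).inter (((isClosed_Ici.preimage continuous_snd)).inter (isClosed_Iic.preimage (continuous_fst.add continuous_snd)))

lemma Δ2_compact : IsCompact Δ2 := by
  refine Metric.isCompact_of_isClosed_isBounded Δ2_closed ?_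
  refine (Metric.isBounded_Icc ((0:ℝ),(0:ℝ)) (1,1)).subset ?_
  rintro ⟨x,y⟩ ⟨h1,h2,h3⟩
  constructor <;> constructor <;> simp_all <;> linarith

lemma Δ2_meas : MeasurableSet Δ2 := Δ2_closed.measurableSet

lemma integral_Δ2 (α β γ : ℝ) :
    ∫ p in Δ2, (α + β * p.1 + γ * p.2) = α/2 + β/6 + γ/6 := by
  have hcont : Continuous fun p : ℝ×ℝ => α + β * p.1 + γ * p.2 := by fun_prop
  have hint : IntegrableOn (fun p : ℝ×ℝ => α + β * p.1 + γ * p.2) Δ2 :=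
    hcont.continuousOn.integrableOn_compact Δ2_compact
  rw [← integral_indicator Δ2_meas]
  rw [Measure.volume_eq_prod, MeasureTheory.integral_prod _ ((integrable_indicator_iff Δ2_meas).2 hint)]
  have key : ∀ x : ℝ, (∫ y, Δ2.indicator (fun p : ℝ×ℝ => α + β * p.1 + γ * p.2) (x, y))
      = (Set.Icc (0:ℝ) 1).indicator (fun x => (α + β*x) * (1-x) + γ * ((1-x)^2/2)) x := by
    intro x
    by_cases hx : x ∈ Set.Icc (0:ℝ) 1
    · rw [Set.indicator_of_mem hx]
      have : (fun y => Δ2.indicator (fun p : ℝ×ℝ => α + β * p.1 + γ * p.2) (x, y))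
          = (Set.Icc (0:ℝ) (1-x)).indicator (fun y => (α + β*x) + γ * y) := by
        ext y
        by_cases hy : y ∈ Set.Icc (0:ℝ) (1-x)
        · rw [Set.indicator_of_mem hy, Set.indicator_of_mem]
          constructor
          · exact hx.1
          constructor
          · exact hy.1
          · have := hy.2; linarith
        · rw [Set.indicator_of_notMem hy, Set.indicator_of_notMem]
          intro ⟨h1,h2,h3⟩
          exact hy ⟨h2, by linarith⟩
      rw [this, integral_indicator measurableSet_Icc]
      have h1x : (0:ℝ) ≤ 1 - x := by linarith [hx.2]
      rw [MeasureTheory.integral_Icc_eq_integral_Ioc, ← intervalIntegral.integral_of_le h1x]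
      rw [intervalIntegral.integral_add (f := fun _ : ℝ => α + β*x) (g := fun y : ℝ => γ * y) ((continuous_const : Continuous fun _ : ℝ => α + β*x).intervalIntegrable _ _) ((continuous_const.mul continuous_id').intervalIntegrable _ _)]
      rw [intervalIntegral.integral_const_mul]
      rw [integral_id]; simp
      ring
    · rw [Set.indicator_of_notMem hx]
      have : (fun y => Δ2.indicator (fun p : ℝ×ℝ => α + β * p.1 + γ * p.2) (x, y)) = fun _ => 0 := by
        ext y
        rw [Set.indicator_of_notMem]
        intro ⟨h1,h2,h3⟩
        exact hx ⟨h1, by linarith⟩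
      rw [this, integral_zero]
  simp only [key]
  rw [integral_indicator measurableSet_Icc, MeasureTheory.integral_Icc_eq_integral_Ioc,
    ← intervalIntegral.integral_of_le (by norm_num : (0:ℝ) ≤ 1)]
  have : ∀ x : ℝ, (α + β*x) * (1-x) + γ * ((1-x)^2/2) = (α + γ/2) + (β - α - γ) * x + (γ/2 - β) * x^2 := by
    intro x; ring
  simp only [this]
  have c1 : Continuous fun _ : ℝ => α + γ/2 := continuous_const
  have c2 : Continuous fun x : ℝ => (β - α - γ) * x := continuous_const.mul continuous_id
  have c3 : Continuous fun x : ℝ => (γ/2 - β) * x^2 := continuous_const.mul (continuous_pow 2)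
  rw [intervalIntegral.integral_add (f := fun x : ℝ => α + γ/2 + (β - α - γ) * x) (g := fun x : ℝ => (γ/2 - β) * x^2) ((c1.add c2).intervalIntegrable _ _) (c3.intervalIntegrable _ _),
    intervalIntegral.integral_add (c1.intervalIntegrable _ _) (c2.intervalIntegrable _ _),
    intervalIntegral.integral_const_mul, intervalIntegral.integral_const_mul,
    integral_id, integral_pow]
  simp
  ring

lemma Δ2_convex : Convex ℝ Δ2 := by
  intro p hp q hq s t hs ht hst
  obtain ⟨h1,h2,h3⟩ := hp
  obtain ⟨h4,h5,h6⟩ := hq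
  refine ⟨?_, ?_, ?_⟩ <;>
    simp only [Prod.fst_add, Prod.snd_add, Prod.smul_fst, Prod.smul_snd, smul_eq_mul] <;>
    nlinarith

lemma Δ2_eq_hull : Δ2 = convexHull ℝ {((0:ℝ),(0:ℝ)), (1,0), (0,1)} := by
  apply le_antisymm
  · have hull_eq : convexHull ℝ ({((0:ℝ),(0:ℝ)), (1,0), (0,1)} : Set (ℝ×ℝ))
        = ⋃ y ∈ segment ℝ ((1:ℝ),(0:ℝ)) ((0:ℝ),(1:ℝ)), segment ℝ ((0:ℝ),(0:ℝ)) y := by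
      rw [convexHull_insert (by exact ⟨(1,0), by simp⟩), convexHull_pair, convexJoin_singleton_left]
    rw [hull_eq]
    rintro ⟨x,y⟩ ⟨hx, hy, hxy⟩
    by_cases h0 : x + y = 0
    · have hx0 : x = 0 := by linarith
      have hy0 : y = 0 := by linarith
      have hm1 : ((1:ℝ),(0:ℝ)) ∈ segment ℝ ((1:ℝ),(0:ℝ)) ((0:ℝ),(1:ℝ)) := left_mem_segment ℝ _ _
      have hm2 : ((x:ℝ),(y:ℝ)) ∈ segment ℝ ((0:ℝ),(0:ℝ)) ((1:ℝ),(0:ℝ)) := by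
        refine ⟨1, 0, by norm_num, by norm_num, by norm_num, ?_⟩
        simp [hx0, hy0, Prod.ext_iff]
      exact Set.mem_iUnion₂.2 ⟨_, hm1, hm2⟩
    · have hw : 0 < x + y := lt_of_le_of_ne (by linarith) (Ne.symm h0)
      have hm1 : (x/(x+y), y/(x+y)) ∈ segment ℝ ((1:ℝ),(0:ℝ)) ((0:ℝ),(1:ℝ)) := by
        refine ⟨x/(x+y), y/(x+y), by positivity, by positivity, by field_simp, ?_⟩
        simp [Prod.ext_iff]
      have hm2 : ((x:ℝ),(y:ℝ)) ∈ segment ℝ ((0:ℝ),(0:ℝ)) (x/(x+y), y/(x+y)) := by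
        refine ⟨1-(x+y), x+y, by linarith, by linarith, by ring, ?_⟩
        simp only [Prod.smul_mk, smul_eq_mul, Prod.mk_add_mk, Prod.ext_iff]
        constructor <;> field_simp <;> ring
      exact Set.mem_iUnion₂.2 ⟨_, hm1, hm2⟩
  · exact convexHull_min (by rintro p (rfl|rfl|rfl) <;> norm_num [Δ2]) Δ2_convex

lemma Δ2_closed_unused : IsClosed Δ2 := by
  have : Δ2 = (fun p : ℝ×ℝ => p.1) ⁻¹' (Set.Ici 0) ∩ ((fun p : ℝ×ℝ => p.2) ⁻¹' (Set.Ici 0) ∩ (fun p : ℝ×ℝ => p.1+p.2) ⁻¹' (Set.Iic 1)) := by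
    ext p; simp [Δ2, and_assoc]
  rw [this]
  exact ((isClosed_Ici.preimage continuous_fst)).inter (((isClosed_Ici.preimage continuous_snd)).inter (isClosed_Iic.preimage (continuous_fst.add continuous_snd)))

lemma tri_CoV (a u v : ℝ × ℝ) (hd : u.1*v.2 - u.2*v.1 ≠ 0) (g : ℝ × ℝ → ℝ) :
    ∫ p in convexHull ℝ {a, a + u, a + v}, g p
      = |u.1*v.2 - u.2*v.1| * ∫ p in Δ2, g (a + (p.1 • u + p.2 • v)) := by
  set L : ℝ × ℝ →L[ℝ] ℝ × ℝ := LinearMap.toContinuousLinearMap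
    (Matrix.toLin (Module.Basis.finTwoProd ℝ) (Module.Basis.finTwoProd ℝ) !![u.1, v.1; u.2, v.2]) with hLdef
  have hL : ∀ p : ℝ × ℝ, L p = p.1 • u + p.2 • v := by
    intro p
    show LinearMap.toContinuousLinearMap _ p = _
    rw [LinearMap.coe_toContinuousLinearMap', Matrix.toLin_finTwoProd_apply]
    ext <;> simp [mul_comm]
  have hdet : L.det = u.1*v.2 - u.2*v.1 := by
    rw [hLdef, LinearMap.det_toContinuousLinearMap, LinearMap.det_toLin, Matrix.det_fin_two_of]; ring
  set f : ℝ × ℝ → ℝ × ℝ := fun p => a + L p with hfdef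
  have hF : ∃ F : (ℝ×ℝ) →ᵃ[ℝ] (ℝ×ℝ), ⇑F = f := by
    refine ⟨⟨f, L.toLinearMap, fun p w => ?_⟩, rfl⟩
    show a + L (w + p) = L w + (a + L p)
    rw [map_add]; abel
  obtain ⟨F, hFf⟩ := hF
  have himg : f '' Δ2 = convexHull ℝ {a, a + u, a + v} := by
    rw [← hFf, Δ2_eq_hull, AffineMap.image_convexHull]
    congr 1
    rw [Set.image_insert_eq, Set.image_insert_eq, Set.image_singleton]
    have e0 : F ((0:ℝ),(0:ℝ)) = a := by rw [hFf]; simp [hfdef, hL]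
    have e1 : F ((1:ℝ),(0:ℝ)) = a + u := by rw [hFf]; simp [hfdef, hL]
    have e2 : F ((0:ℝ),(1:ℝ)) = a + v := by rw [hFf]; simp [hfdef, hL]
    rw [e0, e1, e2]
  have hinj : Set.InjOn f Δ2 := by
    intro p _ q _ h
    have h' : L p = L q := by
      have := h; simp only [hfdef] at this
      exact add_left_cancel this
    rw [hL, hL] at h'
    have e1 : p.1*u.1 + p.2*v.1 = q.1*u.1 + q.2*v.1 := by
      have := congrArg Prod.fst h'
      simpa [mul_comm] using this
    have e2 : p.1*u.2 + p.2*v.2 = q.1*u.2 + q.2*v.2 := by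
      have := congrArg Prod.snd h'
      simpa [mul_comm] using this
    have hp1 : p.1 = q.1 := by
      have : (p.1 - q.1) * (u.1*v.2 - u.2*v.1) = 0 := by linear_combination v.2 * e1 - v.1 * e2
      rcases mul_eq_zero.1 this with h0 | h0
      · linarith
      · exact absurd h0 hd
    have hp2 : p.2 = q.2 := by
      have : (p.2 - q.2) * (u.1*v.2 - u.2*v.1) = 0 := by linear_combination u.1 * e2 - u.2 * e1
      rcases mul_eq_zero.1 this with h0 | h0
      · linarith
      · exact absurd h0 hd
    exact Prod.ext hp1 hp2
  have hderiv : ∀ p ∈ Δ2, HasFDerivWithinAt f L Δ2 p := fun p _ =>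
    ((L.hasFDerivAt.const_add a)).hasFDerivWithinAt
  rw [← himg, integral_image_eq_integral_abs_det_fderiv_smul volume Δ2_closed.measurableSet hderiv hinj g]
  simp only [hdet, smul_eq_mul]
  rw [integral_const_mul]
  congr 1
  refine setIntegral_congr_fun Δ2_closed.measurableSet fun p _ => ?_
  simp only [hfdef, hL]

lemma tri_integral_affine (a u v : ℝ × ℝ) (hd : u.1*v.2 - u.2*v.1 ≠ 0) (α β γ : ℝ) :
    ∫ p in convexHull ℝ {a, a + u, a + v}, (α + β*p.1 + γ*p.2)
      = |u.1*v.2 - u.2*v.1| * ((α + β*a.1 + γ*a.2)/2 + (β*u.1 + γ*u.2)/6 + (β*v.1 + γ*v.2)/6) := by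
  rw [tri_CoV a u v hd]
  congr 1
  have h : ∀ p : ℝ × ℝ, α + β*(a + (p.1 • u + p.2 • v)).1 + γ*(a + (p.1 • u + p.2 • v)).2
      = (α + β*a.1 + γ*a.2) + (β*u.1 + γ*u.2)*p.1 + (β*v.1 + γ*v.2)*p.2 := by
    intro p
    simp only [Prod.fst_add, Prod.snd_add, Prod.smul_fst, Prod.smul_snd, smul_eq_mul]
    ring
  simp only [h]
  rw [integral_Δ2]
noncomputable section
namespace WGhelper
open MeasureTheory
open scoped InnerProductSpace

def κ : EuclideanSpace ℝ (Fin 2) ≃ᵐ (ℝ × ℝ) :=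
  (MeasurableEquiv.toLp 2 (Fin 2 → ℝ)).symm.trans MeasurableEquiv.finTwoArrow

lemma κ_pres : MeasurePreserving κ volume volume :=
  (volume_preserving_finTwoArrow ℝ).comp (EuclideanSpace.volume_preserving_symm_measurableEquiv_toLp (ι := Fin 2))

def κL : EuclideanSpace ℝ (Fin 2) →ₗ[ℝ] ℝ × ℝ where
  toFun := fun x => (x 0, x 1)
  map_add' := fun _ _ => rfl
  map_smul' := fun _ _ => rfl

lemma κ_eq_κL : ∀ x, κ x = κL x := fun _ => rfl

lemma κ_image_hull (A B C : EuclideanSpace ℝ (Fin 2)) :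
    κ '' (convexHull ℝ {A, B, C}) = convexHull ℝ {κ A, κ B, κ C} := by
  have h : κ '' (convexHull ℝ {A, B, C}) = κL.toAffineMap '' (convexHull ℝ {A, B, C}) :=
    Set.image_congr fun x _ => κ_eq_κL x
  rw [h, AffineMap.image_convexHull]
  congr 1
  rw [Set.image_insert_eq, Set.image_insert_eq, Set.image_singleton]
  rfl

/-- Transfer a set integral over a set in `EuclideanSpace ℝ (Fin 2)` to `ℝ × ℝ`. -/
lemma transfer (T : Set (EuclideanSpace ℝ (Fin 2))) (g : EuclideanSpace ℝ (Fin 2) → ℝ) :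
    ∫ x in T, g x = ∫ p in κ '' T, g (κ.symm p) := by
  have := (κ_pres.symm κ).setIntegral_preimage_emb κ.symm.measurableEmbedding
    (fun x => g x) T
  rw [← this]
  have him : (κ '' T) = κ.symm ⁻¹' T := κ.toEquiv.image_eq_preimage_symm T
  rw [him]

/-- The doubled signed area. -/
def dd (A B C : EuclideanSpace ℝ (Fin 2)) : ℝ :=
  (B 0 - A 0) * (C 1 - A 1) - (B 1 - A 1) * (C 0 - A 0)

lemma integral_tri_E (A B C : EuclideanSpace ℝ (Fin 2)) (hd : dd A B C ≠ 0) (r : ℝ)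
    (w : EuclideanSpace ℝ (Fin 2)) :
    ∫ x in convexHull ℝ {A, B, C}, (r + ⟪x, w⟫_ℝ)
      = |dd A B C| / 2
        * (r + ((A 0 + B 0 + C 0) * w 0 + (A 1 + B 1 + C 1) * w 1) / 3) := by
  rw [transfer, κ_image_hull]
  have hb : κ B = κ A + (κ B - κ A) := by ring
  have hc : κ C = κ A + (κ C - κ A) := by ring
  rw [show ({κ A, κ B, κ C} : Set (ℝ × ℝ)) = {κ A, κ A + (κ B - κ A), κ A + (κ C - κ A)} by
    rw [← hb, ← hc]]
  have hinteg : ∀ p : ℝ × ℝ, r + ⟪κ.symm p, w⟫_ℝ = r + w 0 * p.1 + w 1 * p.2 := by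
    intro p
    have h0 : (κ.symm p) 0 = p.1 := rfl
    have h1 : (κ.symm p) 1 = p.2 := rfl
    simp [PiLp.inner_apply, Fin.sum_univ_two, RCLike.inner_apply, h0, h1]
    ring
  simp only [hinteg]
  have hd' : (κ B - κ A).1 * (κ C - κ A).2 - (κ B - κ A).2 * (κ C - κ A).1 = dd A B C := by
    simp only [Prod.fst_sub, Prod.snd_sub]
    show (B 0 - A 0) * (C 1 - A 1) - (B 1 - A 1) * (C 0 - A 0) = dd A B C
    rfl
  rw [tri_integral_affine _ _ _ (by rw [hd']; exact hd) r (w 0) (w 1), hd']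
  have ha0 : (κ A).1 = A 0 := rfl
  have ha1 : (κ A).2 = A 1 := rfl
  simp only [Prod.fst_sub, Prod.snd_sub, ha0, ha1]
  show _ = |dd A B C| / 2 * (r + ((A 0 + B 0 + C 0) * w 0 + (A 1 + B 1 + C 1) * w 1) / 3)
  have hb0 : (κ B).1 = B 0 := rfl
  have hb1 : (κ B).2 = B 1 := rfl
  have hc0 : (κ C).1 = C 0 := rfl
  have hc1 : (κ C).2 = C 1 := rfl
  rw [hb0, hb1, hc0, hc1]
  ring

end WGhelper

section Main
open WGhelper

set_option maxHeartbeats 2000000 in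
/-- Weak gradient of the edge basis function: let `T` be the triangle with
vertices `A, B, C`, centroid `x_T`, area `|T|`, and let `e = [B, C]` be an edge
of `T` with length `|e| = ‖C - B‖` and outward unit normal `n`.  Let
`ψ = {0, χ_e}` be the weak function vanishing in the interior of `T` and equal
to the indicator of `e` on `∂T`.  Then the function
`x ↦ (C_T/3)(x - x_T) + (|e|/|T|) n`, with `C_T = 2|T|/‖x - x_T‖²_{L²(T)}`,
satisfies the defining equation of the weak gradient: for every
`τ ∈ RT₀(T)`, `τ(x) = a + c x`,
`(∇_w ψ, τ)_T = ⟨ψ_b, τ·n⟩_{∂T} = ∫_e τ·n ds` (the interior term vanishes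
since `ψ₀ = 0`, and only the edge `e` contributes on the boundary). -/
theorem weak_gradient_edge_basis
    (A B C : EuclideanSpace ℝ (Fin 2))
    (hABC : AffineIndependent ℝ ![A, B, C])
    (T : Set (EuclideanSpace ℝ (Fin 2)))
    (hT : T = convexHull ℝ {A, B, C})
    (xT : EuclideanSpace ℝ (Fin 2)) (hxT : xT = (3:ℝ)⁻¹ • (A + B + C))
    (areaT : ℝ) (hareaT : areaT = (volume T).toReal)
    (CT : ℝ) (hCT : CT = 2 * areaT / ∫ x in T, ‖x - xT‖ ^ 2)
    (lenE : ℝ) (hlenE : lenE = ‖C - B‖)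
    (n : EuclideanSpace ℝ (Fin 2))
    (hn_unit : ‖n‖ = 1)
    (hn_perp : ⟪C - B, n⟫_ℝ = 0)
    (hn_outward : ⟪A - B, n⟫_ℝ < 0) :
    ∀ (a : EuclideanSpace ℝ (Fin 2)) (c : ℝ),
      ∫ x in T, ⟪(CT / 3) • (x - xT) + (lenE / areaT) • n, a + c • x⟫_ℝ
        = (∫ t in (0:ℝ)..1, ⟪a + c • (B + t • (C - B)), n⟫_ℝ) * ‖C - B‖ := by
  intro a c
  have hinner : ∀ x y : EuclideanSpace ℝ (Fin 2), ⟪x, y⟫_ℝ = x 0 * y 0 + x 1 * y 1 := by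
    intro x y; simp [PiLp.inner_apply, Fin.sum_univ_two, RCLike.inner_apply]; ring
  -- B ≠ C
  have hBC : B ≠ C := by
    intro h
    have h12 : (1 : Fin 3) = 2 := hABC.injective (by simp [h])
    exact absurd h12 (by decide)
  have hlen_pos : 0 < lenE := by
    rw [hlenE]; exact norm_pos_iff.2 (sub_ne_zero.2 (Ne.symm hBC))
  -- scalar coordinate facts
  have hperp : (C 0 - B 0) * n 0 + (C 1 - B 1) * n 1 = 0 := by
    have h := hn_perp
    rw [hinner] at h
    simpa [PiLp.sub_apply] using h
  have hunit : n 0 ^ 2 + n 1 ^ 2 = 1 := by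
    have h : ⟪n, n⟫_ℝ = 1 := by
      rw [real_inner_self_eq_norm_sq, hn_unit]; norm_num
    rw [hinner] at h
    nlinarith [h]
  have hs_pos : 0 < ⟪B - A, n⟫_ℝ := by
    have : ⟪B - A, n⟫_ℝ = -⟪A - B, n⟫_ℝ := by
      rw [show B - A = -(A - B) by abel, inner_neg_left]
    rw [this]; linarith
  have hsc : (B 0 - A 0) * n 0 + (B 1 - A 1) * n 1 = ⟪B - A, n⟫_ℝ := by
    rw [hinner]; simp [PiLp.sub_apply]
  have hlen_sq : lenE ^ 2 = (C 0 - B 0) ^ 2 + (C 1 - B 1) ^ 2 := by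
    rw [hlenE, ← real_inner_self_eq_norm_sq, hinner]
    simp [PiLp.sub_apply]; ring
  -- determinant facts
  set m : ℝ := n 0 * (C 1 - B 1) - n 1 * (C 0 - B 0) with hm
  have hm2 : m ^ 2 = lenE ^ 2 := by
    rw [hm, hlen_sq]
    linear_combination ((C 0 - B 0)^2 + (C 1 - B 1)^2) * hunit
      - ((C 0 - B 0) * n 0 + (C 1 - B 1) * n 1) * hperp
  have hm_abs : |m| = lenE := by
    have : |m| = |lenE| := by
      rw [← Real.sqrt_sq_eq_abs, ← Real.sqrt_sq_eq_abs, hm2]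
    rw [this, abs_of_pos hlen_pos]
  have hkey : dd A B C = ⟪B - A, n⟫_ℝ * m := by
    rw [← hsc, hm, dd]
    linear_combination ((B 0 - A 0) * n 1 - (B 1 - A 1) * n 0) * hperp
      - ((B 0 - A 0) * (C 1 - B 1) - (B 1 - A 1) * (C 0 - B 0)) * hunit
  have hdd_abs : |dd A B C| = ⟪B - A, n⟫_ℝ * lenE := by
    rw [hkey, abs_mul, hm_abs, abs_of_pos hs_pos]
  have hdd_ne : dd A B C ≠ 0 := by
    rw [hkey]
    refine mul_ne_zero (ne_of_gt hs_pos) ?_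
    intro h0
    rw [h0, abs_zero] at hm_abs
    linarith
  subst hT
  -- area
  have harea_dd : areaT = |dd A B C| / 2 := by
    have h1 := integral_tri_E A B C hdd_ne 1 (0 : EuclideanSpace ℝ (Fin 2))
    have h2 : ∀ x : EuclideanSpace ℝ (Fin 2),
        (1 : ℝ) + ⟪x, (0 : EuclideanSpace ℝ (Fin 2))⟫_ℝ = 1 := by
      intro x; simp
    simp only [h2] at h1
    rw [setIntegral_const] at h1
    have h3 : ((0 : EuclideanSpace ℝ (Fin 2)) 0 : ℝ) = 0 := rfl
    have h4 : ((0 : EuclideanSpace ℝ (Fin 2)) 1 : ℝ) = 0 := rfl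
    rw [h3, h4] at h1
    simp at h1
    rw [hareaT, ← measureReal_def, h1]
  have harea_pos : 0 < areaT := by
    rw [harea_dd, hdd_abs]; positivity
  -- centroid integrals
  have hxT0 : xT 0 = (A 0 + B 0 + C 0) / 3 := by
    rw [hxT]
    simp [PiLp.smul_apply, PiLp.add_apply, smul_eq_mul]
    ring
  have hxT1 : xT 1 = (A 1 + B 1 + C 1) / 3 := by
    rw [hxT]
    simp [PiLp.smul_apply, PiLp.add_apply, smul_eq_mul]
    ring
  have haff : ∀ (r : ℝ) (w : EuclideanSpace ℝ (Fin 2)),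
      ∫ x in convexHull ℝ {A, B, C}, (r + ⟪x, w⟫_ℝ) = areaT * (r + ⟪xT, w⟫_ℝ) := by
    intro r w
    rw [integral_tri_E A B C hdd_ne r w, harea_dd, hinner, hxT0, hxT1]
    ring
  -- positivity of the second moment
  set T : Set (EuclideanSpace ℝ (Fin 2)) := convexHull ℝ {A, B, C} with hTdef
  have hTcompact : IsCompact T := (Set.toFinite ({A, B, C} : Set (EuclideanSpace ℝ (Fin 2)))).isCompact_convexHull (𝕜 := ℝ)
  have hTmeas : MeasurableSet T := hTcompact.isClosed.measurableSet
  have hvol_pos : (0 : ENNReal) < volume T := by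
    rcases eq_or_ne (volume T) 0 with h0 | h0
    · exfalso
      rw [hareaT, h0] at harea_pos
      simp at harea_pos
    · exact pos_iff_ne_zero.2 h0
  set I : ℝ := ∫ x in T, ‖x - xT‖ ^ 2 with hI
  have hIcont : Continuous fun x : EuclideanSpace ℝ (Fin 2) => ‖x - xT‖ ^ 2 := by fun_prop
  have hIint : IntegrableOn (fun x : EuclideanSpace ℝ (Fin 2) => ‖x - xT‖ ^ 2) T :=
    hIcont.continuousOn.integrableOn_compact hTcompact
  have hI_pos : 0 < I := by
    rw [hI, setIntegral_pos_iff_support_of_nonneg_ae]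
    · have hsub : T \ {xT} ⊆ (Function.support fun x => ‖x - xT‖ ^ 2) ∩ T := by
        rintro x ⟨hxT', hxne⟩
        refine ⟨?_, hxT'⟩
        simp only [Function.mem_support]
        intro hz
        apply hxne
        have hx0 : x - xT = 0 := by
          rwa [pow_eq_zero_iff (by norm_num), norm_eq_zero] at hz
        simpa [sub_eq_zero] using hx0
      calc (0:ENNReal) < volume (T \ {xT}) := by
            rw [measure_diff_null (measure_singleton xT)]; exact hvol_pos
        _ ≤ _ := measure_mono hsub
    · exact Filter.Eventually.of_forall fun x => by positivity
    · exact hIint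
  have hCTI : CT * I = 2 * areaT := by
    rw [hCT]
    field_simp
  -- split the integrand
  have hsplit : ∀ x : EuclideanSpace ℝ (Fin 2),
      ⟪(CT / 3) • (x - xT) + (lenE / areaT) • n, a + c • x⟫_ℝ
        = (CT * c / 3) * ‖x - xT‖ ^ 2
          + (((lenE / areaT) * ⟪n, a⟫_ℝ - (CT / 3) * ⟪xT, a⟫_ℝ - (CT * c / 3) * ⟪xT, xT⟫_ℝ)
            + ⟪x, (CT / 3) • a + ((CT * c) / 3) • xT + ((lenE / areaT) * c) • n⟫_ℝ) := by
    intro x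
    rw [← real_inner_self_eq_norm_sq]
    simp only [hinner, PiLp.add_apply, PiLp.sub_apply, PiLp.smul_apply, smul_eq_mul]
    ring
  simp only [hsplit]
  rw [integral_add (by exact (hIint.const_mul _)) ?hi2]
  case hi2 =>
    exact ((continuous_const.add ((continuous_id.inner continuous_const))).continuousOn.integrableOn_compact hTcompact)
  rw [integral_const_mul, ← hI, haff]
  -- compute RHS
  have hRHSint : ∀ t : ℝ, ⟪a + c • (B + t • (C - B)), n⟫_ℝ = ⟪a, n⟫_ℝ + c * ⟪B, n⟫_ℝ := by
    intro t
    rw [inner_add_left, real_inner_smul_left, inner_add_left, real_inner_smul_left, hn_perp]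
    ring
  simp only [hRHSint]
  rw [intervalIntegral.integral_const, sub_zero, one_smul, ← hlenE]
  -- final scalar computation
  have hxTn : ⟪xT, n⟫_ℝ = (⟪A, n⟫_ℝ + ⟪B, n⟫_ℝ + ⟪C, n⟫_ℝ) / 3 := by
    rw [hxT, real_inner_smul_left, inner_add_left, inner_add_left]
    ring
  have hCn : ⟪C, n⟫_ℝ = ⟪B, n⟫_ℝ := by
    have := hn_perp
    rw [inner_sub_left] at this
    linarith
  have hBA : ⟪B - A, n⟫_ℝ = ⟪B, n⟫_ℝ - ⟪A, n⟫_ℝ := by rw [inner_sub_left]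
  have harea_val : areaT = (⟪B, n⟫_ℝ - ⟪A, n⟫_ℝ) * lenE / 2 := by
    rw [harea_dd, hdd_abs, hBA]
  have hQBA : ⟪B, n⟫_ℝ - ⟪A, n⟫_ℝ ≠ 0 := by rw [← hBA]; exact ne_of_gt hs_pos
  have hlenne : lenE ≠ 0 := ne_of_gt hlen_pos
  have hAne : areaT ≠ 0 := ne_of_gt harea_pos
  rw [inner_add_right, inner_add_right, real_inner_smul_right, real_inner_smul_right,
    real_inner_smul_right]
  rw [real_inner_comm a n, hxTn, hCn]
  have e1 : CT * c / 3 * I = 2 * areaT * c / 3 := by linear_combination (c / 3) * hCTI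
  rw [e1]
  set P := ⟪a, n⟫_ℝ with hPdef
  set QA := ⟪A, n⟫_ℝ with hQAdef
  set QB := ⟪B, n⟫_ℝ with hQBdef
  set k := lenE / areaT with hkdef
  have hk : k * areaT = lenE := by
    rw [hkdef]; exact div_mul_cancel₀ lenE hAne
  linear_combination (P + c * (QA + QB + QB) / 3) * hk + (2 * c / 3) * harea_val

end Main
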